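/- Let the exact recurrence c_k^{(n)} = ((z−t·z_{n+k})c_k^{(n−1)} − (z−t·z_k)c_{k+1}^{(n−1)})/(z_k − z_{k+n}) be perturbed multiplicatively: c̃_k^{(n)} = ((1+α)(z−t·z_{n+k})c̃_k^{(n−1)} − (1+β)(z−t·z_k)c̃_{k+1}^{(n−1)})/(z_k − z_{k+n}) with |α|,|β| ≤ η, starting from c̃_k^{(0)} = f_k. If the backward errors at level n−1 satisfy |δ_{k,j}^{(n−1)}| ≤ θ, then the level-n result admits a backward-error representation c̃_k^{(n)} = ∑_{j=k}^{k+n} f_j(1+δ_{k,j}^{(n)}) ∏_{i=k,i≠j}^{k+n} (z−t·z_i)/(z_j−z_i) with |δ_{k,j}^{(n)}| ≤ L·max over the combined factors |(1+α)(1+δ^{(n−1)}) − 1| and |(1+β)(1+δ^{(n−1)}) − 1|, where L = max_{0≤i<j<k≤N} (|z_i−z_j|+|z_j−z_k|)/|z_i−z_k|. In particular |δ_{k,j}^{(n)}| ≤ L·(η + θ + ηθ). -/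

import Mathlib

private lemma helper1 (x W F G P D E : ℂ) (hD : D ≠ 0) (hE : E ≠ 0) :
    x * W * (F * G * P) / D = F * (x * G * (E / D)) * (W / E * P) := by
  field_simp

private lemma helper2 (x W F G P D E : ℂ) (hD : D ≠ 0) (hE : E ≠ 0) :
    -(x * W * (F * G * P) / D) = F * (x * G * (-E / D)) * (W / E * P) := by
  field_simp


/-- One-step backward-error propagation for the perturbed Aitken recurrence:
if the level-(n−1) values admit backward-error representations with errors bounded
by `θ`, and the recurrence step carries multiplicative perturbations `α, β` with
`|α|,|β| ≤ η`, then the level-n result admits a backward-error representation with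
errors bounded by `L·(η + θ + η·θ)`, where
`L = max_{0≤i<j<k≤N} (|z_i−z_j|+|z_j−z_k|)/|z_i−z_k|`. -/
theorem stmt11 (N : ℕ) (hN : 2 ≤ N) (zs f : ℕ → ℂ) (t w : ℂ)
    (hz : ∀ i ≤ N, ∀ j ≤ N, i ≠ j → zs i ≠ zs j)
    (L : ℝ)
    (hL : IsGreatest {r : ℝ | ∃ i j k : ℕ, i < j ∧ j < k ∧ k ≤ N ∧
      r = (‖zs i - zs j‖ + ‖zs j - zs k‖) /
          ‖zs i - zs k‖} L)
    (η θ : ℝ) (hη : 0 ≤ η) (hθ : 0 ≤ θ)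
    (k n : ℕ) (hn : 1 ≤ n) (hkn : k + n ≤ N)
    (α β : ℂ) (hα : ‖α‖ ≤ η) (hβ : ‖β‖ ≤ η)
    (δ₁ δ₂ : ℕ → ℂ)
    (hδ₁ : ∀ j, k ≤ j → j ≤ k + n - 1 → ‖δ₁ j‖ ≤ θ)
    (hδ₂ : ∀ j, k + 1 ≤ j → j ≤ k + n → ‖δ₂ j‖ ≤ θ)
    (c₁ c₂ cnew : ℂ)
    (hc₁ : c₁ = ∑ j ∈ Finset.Icc k (k + n - 1), f j * (1 + δ₁ j) *
      ∏ i ∈ (Finset.Icc k (k + n - 1)).erase j, (w - t * zs i) / (zs j - zs i))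
    (hc₂ : c₂ = ∑ j ∈ Finset.Icc (k + 1) (k + n), f j * (1 + δ₂ j) *
      ∏ i ∈ (Finset.Icc (k + 1) (k + n)).erase j, (w - t * zs i) / (zs j - zs i))
    (hcnew : cnew = ((1 + α) * (w - t * zs (n + k)) * c₁
        - (1 + β) * (w - t * zs k) * c₂) / (zs k - zs (k + n))) :
    ∃ δ : ℕ → ℂ,
      (∀ j, k ≤ j → j ≤ k + n → ‖δ j‖ ≤ L * (η + θ + η * θ)) ∧
      cnew = ∑ j ∈ Finset.Icc k (k + n), f j * (1 + δ j) *
        ∏ i ∈ (Finset.Icc k (k + n)).erase j, (w - t * zs i) / (zs j - zs i) := by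
  have hkN : k ≤ N := by omega
  have hmN : k + n ≤ N := hkn
  have hzsne : ∀ i ≤ N, ∀ j ≤ N, i ≠ j → zs i - zs j ≠ 0 :=
    fun i hi j hj h => sub_ne_zero.mpr (hz i hi j hj h)
  have hD : zs k - zs (k + n) ≠ 0 := hzsne k hkN (k + n) hmN (by omega)
  set lam : ℕ → ℂ := fun j => (zs j - zs (k + n)) / (zs k - zs (k + n)) with hlam
  set mu : ℕ → ℂ := fun j => (zs k - zs j) / (zs k - zs (k + n)) with hmu
  -- L ≥ 1
  obtain ⟨i0, j0, k0, hij0, hjk0, hk0N, hLeq⟩ := hL.1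
  have hL1 : 1 ≤ L := by
    rw [hLeq, one_le_div (by
      apply norm_pos_iff.mpr
      exact hzsne i0 (by omega) k0 hk0N (by omega))]
    exact norm_sub_le_norm_sub_add_norm_sub _ (zs j0) _
  have hE : (0:ℝ) ≤ η + θ + η * θ := by positivity
  have hcomb : ∀ x y : ℂ, ‖x‖ ≤ η → ‖y‖ ≤ θ →
      ‖(1 + x) * (1 + y) - 1‖ ≤ η + θ + η * θ := by
    intro x y hx hy
    have h1 : (1 + x) * (1 + y) - 1 = x + y + x * y := by ring
    rw [h1]
    calc ‖x + y + x * y‖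
        ≤ ‖x + y‖ + ‖x * y‖ := norm_add_le _ _
      _ ≤ (‖x‖ + ‖y‖) + ‖x‖ * ‖y‖ := by
          rw [norm_mul]; gcongr; exact norm_add_le _ _
      _ ≤ η + θ + η * θ := by gcongr
  refine ⟨fun j => (1 + α) * (1 + δ₁ j) * lam j + (1 + β) * (1 + δ₂ j) * mu j - 1, ?_, ?_⟩
  · intro j hjk hjm
    show ‖(1 + α) * (1 + δ₁ j) * lam j + (1 + β) * (1 + δ₂ j) * mu j - 1‖
      ≤ L * (η + θ + η * θ)
    rcases eq_or_lt_of_le hjk with hk' | hk'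
    · -- j = k
      subst hk'
      have hlamk : lam k = 1 := by simp [hlam, div_self hD]
      have hmuk : mu k = 0 := by simp [hmu]
      have heq : (1 + α) * (1 + δ₁ k) * lam k + (1 + β) * (1 + δ₂ k) * mu k - 1
          = (1 + α) * (1 + δ₁ k) - 1 := by rw [hlamk, hmuk]; ring
      rw [heq]
      exact le_trans (hcomb α (δ₁ k) hα (hδ₁ k le_rfl (by omega)))
        (le_mul_of_one_le_left hE hL1)
    · rcases eq_or_lt_of_le hjm with hm' | hm'
      · -- j = k + n
        subst hm'
        have hlamm : lam (k+n) = 0 := by simp [hlam]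
        have hmum : mu (k+n) = 1 := by simp [hmu, div_self hD]
        have heq : (1 + α) * (1 + δ₁ (k+n)) * lam (k+n) + (1 + β) * (1 + δ₂ (k+n)) * mu (k+n) - 1
            = (1 + β) * (1 + δ₂ (k+n)) - 1 := by rw [hlamm, hmum]; ring
        rw [heq]
        exact le_trans (hcomb β (δ₂ (k+n)) hβ (hδ₂ (k+n) (by omega) le_rfl))
          (le_mul_of_one_le_left hE hL1)
      · -- k < j < k + n
        have hsum1 : lam j + mu j = 1 := by
          simp only [hlam, hmu]; field_simp; ring
        have hrw : (1 + α) * (1 + δ₁ j) * lam j + (1 + β) * (1 + δ₂ j) * mu j - 1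
            = lam j * ((1 + α) * (1 + δ₁ j) - 1) + mu j * ((1 + β) * (1 + δ₂ j) - 1) := by
          linear_combination hsum1
        rw [hrw]
        have hb1 := hcomb α (δ₁ j) hα (hδ₁ j (by omega) (by omega))
        have hb2 := hcomb β (δ₂ j) hβ (hδ₂ j (by omega) (by omega))
        have hmem : (‖zs k - zs j‖ + ‖zs j - zs (k+n)‖) /
            ‖zs k - zs (k+n)‖ ≤ L :=
          hL.2 ⟨k, j, k+n, hk', hm', hmN, rfl⟩
        have habs : ‖lam j‖ + ‖mu j‖ ≤ L := by
          simp only [hlam, hmu, norm_div]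
          rw [← add_div]
          calc (‖zs j - zs (k+n)‖ + ‖zs k - zs j‖) /
              ‖zs k - zs (k+n)‖
              = (‖zs k - zs j‖ + ‖zs j - zs (k+n)‖) /
              ‖zs k - zs (k+n)‖ := by ring
            _ ≤ L := hmem
        calc ‖lam j * ((1 + α) * (1 + δ₁ j) - 1) + mu j * ((1 + β) * (1 + δ₂ j) - 1)‖
            ≤ ‖lam j‖ * ‖(1 + α) * (1 + δ₁ j) - 1‖
              + ‖mu j‖ * ‖(1 + β) * (1 + δ₂ j) - 1‖ := by
              refine le_trans (norm_add_le _ _) ?_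
              rw [norm_mul, norm_mul]
          _ ≤ ‖lam j‖ * (η + θ + η * θ) + ‖mu j‖ * (η + θ + η * θ) := by
              gcongr
          _ = (‖lam j‖ + ‖mu j‖) * (η + θ + η * θ) := by ring
          _ ≤ L * (η + θ + η * θ) := mul_le_mul_of_nonneg_right habs hE
  · -- the algebraic identity
    have hins1 : insert (k + n) (Finset.Icc k (k + n - 1)) = Finset.Icc k (k + n) := by
      have h : k + n - 1 + 1 = k + n := by omega
      rw [← h] ; exact Finset.insert_Icc_right_eq_Icc_add_one (by omega)
    have hins2 : insert k (Finset.Icc (k + 1) (k + n)) = Finset.Icc k (k + n) := by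
      exact Finset.insert_Icc_add_one_left_eq_Icc (by omega)
    have hmnot1 : (k + n) ∉ Finset.Icc k (k + n - 1) := by
      simp only [Finset.mem_Icc] ; omega
    have hknot2 : k ∉ Finset.Icc (k + 1) (k + n) := by
      simp only [Finset.mem_Icc] ; omega
    have h1 : (1 + α) * (w - t * zs (n + k)) * c₁ / (zs k - zs (k + n))
        = ∑ j ∈ Finset.Icc k (k + n), f j * ((1 + α) * (1 + δ₁ j) * lam j) *
          ∏ i ∈ (Finset.Icc k (k + n)).erase j, (w - t * zs i) / (zs j - zs i) := by
      rw [hc₁, Finset.mul_sum, Finset.sum_div, ← hins1,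
        Finset.sum_insert hmnot1]
      have hz0 : lam (k + n) = 0 := by simp [hlam]
      rw [hz0]
      rw [show f (k+n) * ((1 + α) * (1 + δ₁ (k+n)) * 0) *
        ∏ i ∈ (insert (k+n) (Finset.Icc k (k + n - 1))).erase (k+n),
          (w - t * zs i) / (zs (k+n) - zs i) = 0 by ring, zero_add]
      refine Finset.sum_congr rfl ?_
      intro j hj
      simp only [Finset.mem_Icc] at hj
      have hjm : j ≠ k + n := by omega
      have hjzm : zs j - zs (k + n) ≠ 0 := hzsne j (by omega) (k + n) hmN hjm
      rw [Finset.erase_insert_of_ne (fun h => hjm h.symm), Finset.prod_insert (by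
        simp only [Finset.mem_erase, Finset.mem_Icc]; omega)]
      rw [show n + k = k + n from by omega]
      simp only [hlam]
      exact helper1 _ _ _ _ _ _ _ hD hjzm
    have h2 : -((1 + β) * (w - t * zs k) * c₂ / (zs k - zs (k + n)))
        = ∑ j ∈ Finset.Icc k (k + n), f j * ((1 + β) * (1 + δ₂ j) * mu j) *
          ∏ i ∈ (Finset.Icc k (k + n)).erase j, (w - t * zs i) / (zs j - zs i) := by
      rw [hc₂, Finset.mul_sum, Finset.sum_div, ← Finset.sum_neg_distrib, ← hins2,
        Finset.sum_insert hknot2]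
      have hz0 : mu k = 0 := by simp [hmu]
      rw [hz0]
      rw [show f k * ((1 + β) * (1 + δ₂ k) * 0) *
        ∏ i ∈ (insert k (Finset.Icc (k + 1) (k + n))).erase k,
          (w - t * zs i) / (zs k - zs i) = 0 by ring, zero_add]
      refine Finset.sum_congr rfl ?_
      intro j hj
      simp only [Finset.mem_Icc] at hj
      have hjk : j ≠ k := by omega
      have hjzk : zs j - zs k ≠ 0 := hzsne j (by omega) k hkN hjk
      rw [Finset.erase_insert_of_ne (fun h => hjk h.symm), Finset.prod_insert (by
        simp only [Finset.mem_erase, Finset.mem_Icc]; omega)]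
      simp only [hmu]
      rw [show zs k - zs j = -(zs j - zs k) from (neg_sub _ _).symm]
      exact helper2 _ _ _ _ _ _ _ hD hjzk
    show cnew = ∑ j ∈ Finset.Icc k (k + n),
      f j * (1 + ((1 + α) * (1 + δ₁ j) * lam j + (1 + β) * (1 + δ₂ j) * mu j - 1)) *
        ∏ i ∈ (Finset.Icc k (k + n)).erase j, (w - t * zs i) / (zs j - zs i)
    rw [hcnew, sub_div, sub_eq_add_neg, h1, h2, ← Finset.sum_add_distrib]
    refine Finset.sum_congr rfl ?_
    intro j _
    ring
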